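/- Let L be a finite graded lattice of rank n ≥ 2 whose proper part has nonzero (n-2)-nd reduced homology over k, and let b be any coatom of L. Then there exists an atom a of L that is not comparable to b and such that the order complex of the open interval (a, 1̂) has nonzero (n-3)-rd reduced homology over k. -/

import Mathlib

set_option maxSynthPendingDepth 2

open Finset

variable {α : Type*}

/-- A `j`-vertex simplex of the order complex of `s ⊆ α`: a strictly increasing
`j`-tuple of elements of `s` (for `j = 0` this is the unique empty simplex). -/
def OrderedSimplex [Preorder α] (s : Set α) (j : ℕ) : Type _ :=
  {f : Fin j → α // StrictMono f ∧ ∀ i, f i ∈ s}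

/-- The module of simplicial chains with `j` vertices (i.e. of degree `j - 1`)
of the order complex of `s`, with coefficients in `K`.  Since degree `j = 0`
corresponds to the empty simplex, this is the *augmented* chain complex. -/
abbrev SimpChains (K : Type*) [CommRing K] [Preorder α] (s : Set α) (j : ℕ) :=
  OrderedSimplex s j →₀ K

/-- The `i`-th face of a simplex (delete the `i`-th vertex). -/
def OrderedSimplex.face [Preorder α] {s : Set α} {j : ℕ}
    (σ : OrderedSimplex s (j + 1)) (i : Fin (j + 1)) : OrderedSimplex s j :=
  ⟨σ.1 ∘ Fin.succAbove i, σ.2.1.comp (Fin.strictMono_succAbove i), fun _ => σ.2.2 _⟩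

/-- The simplicial boundary map (for `j = 0` it is the augmentation). -/
noncomputable def simpBoundary (K : Type*) [CommRing K] [Preorder α] (s : Set α) (j : ℕ) :
    SimpChains K s (j + 1) →ₗ[K] SimpChains K s j :=
  Finsupp.lsum K fun σ => ∑ i : Fin (j + 1), ((-1 : K) ^ (i : ℕ)) • Finsupp.lsingle (σ.face i)

/-- Cycles with `j` vertices (for `j = 0` every chain is a cycle). -/
noncomputable def simpCycles (K : Type*) [CommRing K] [Preorder α] (s : Set α) :
    (j : ℕ) → Submodule K (SimpChains K s j)
  | 0 => ⊤
  | (i + 1) => LinearMap.ker (simpBoundary K s i)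

/-- Boundaries with `j` vertices. -/
noncomputable def simpBoundaries (K : Type*) [CommRing K] [Preorder α] (s : Set α) (j : ℕ) :
    Submodule K (SimpChains K s j) :=
  LinearMap.range (simpBoundary K s j)

/-- `ReducedHomology K s j` is the reduced simplicial homology group
`H̃_{j-1}(Δ(s); K)` of the order complex of `s` (the index `j` counts vertices,
so `j = 0` gives `H̃₋₁` and `j = n - 1` gives `H̃_{n-2}`). -/
noncomputable def ReducedHomology (K : Type*) [CommRing K] [Preorder α] (s : Set α) (j : ℕ) :=
  ↥(simpCycles K s j) ⧸ (simpBoundaries K s j).comap (simpCycles K s j).subtype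

noncomputable instance (K : Type*) [CommRing K] [Preorder α] (s : Set α) (j : ℕ) :
    AddCommGroup (ReducedHomology K s j) := by unfold ReducedHomology; infer_instance

noncomputable instance (K : Type*) [CommRing K] [Preorder α] (s : Set α) (j : ℕ) :
    Module K (ReducedHomology K s j) := by unfold ReducedHomology; infer_instance

/-- The proper part `L ∖ {⊥, ⊤}` of a bounded poset. -/
def properPart (α : Type*) [Preorder α] [BoundedOrder α] : Set α :=
  {x | x ≠ ⊥ ∧ x ≠ ⊤}

/-- The flag `f`-vector entry `f_P(S)`: the number of chains in the proper part
of `P` whose set of ranks is exactly `S`. -/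
noncomputable def flagf (α : Type*) [Preorder α] [BoundedOrder α] [GradeMinOrder ℕ α]
    (S : Finset ℕ) : ℕ :=
  Nat.card {C : Finset α // IsChain (· ≤ ·) (C : Set α) ∧ (↑C ⊆ properPart α) ∧
    C.image (grade ℕ) = S}

/-- The multinomial coefficient `α_n(S) = n! / (s₁!·(s₂-s₁)!⋯(n-s_l)!)`
for `S = {s₁ < s₂ < ⋯ < s_l} ⊆ [n-1]`; it equals `f_{B_n}(S)`. -/
def alphaMulti (n : ℕ) (S : Finset ℕ) : ℕ :=
  n.factorial /
    ((S.sort (· ≤ ·) ++ [n]).zipWith (fun b a => (b - a).factorial)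
      (0 :: S.sort (· ≤ ·))).prod

/-- An element `x` of a graded bounded poset is *good* if `x = ⊥` or the order
complex of the open interval `(⊥, x)` has nontrivial top reduced homology
`H̃_{ρ(x)-2}` over `K`. -/
def IsGoodElement (K : Type*) [CommRing K] [Preorder α] [OrderBot α] [GradeMinOrder ℕ α]
    (x : α) : Prop :=
  x = ⊥ ∨ Nontrivial (ReducedHomology K (Set.Ioo (⊥ : α) x) (grade ℕ x - 1))
set_option linter.unusedSectionVars false

-- H1
lemma StrictMono.fin_nat_add_le {j : ℕ} {f : Fin j → ℕ} (hf : StrictMono f) :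
    ∀ (d : ℕ) (k l : Fin j), (l : ℕ) = (k : ℕ) + d → f k + d ≤ f l := by
  intro d
  induction d with
  | zero => intro k l h; have : l = k := Fin.ext (by omega); subst this; omega
  | succ d ih =>
    intro k l h
    have hl : (k : ℕ) + d < j := by have := l.isLt; omega
    have h1 := ih k ⟨(k : ℕ) + d, hl⟩ rfl
    have h2 : f ⟨(k : ℕ) + d, hl⟩ < f l := hf (by simp [Fin.lt_def]; omega)
    omega

section Graded
variable [PartialOrder α] [BoundedOrder α] [GradeMinOrder ℕ α]

lemma grade_lt {x y : α} (h : x < y) : grade ℕ x < grade ℕ y := grade_strictMono h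

-- H2
lemma facet_grade {m : ℕ} (hrank : grade ℕ (⊤ : α) = m + 2)
    (σ : OrderedSimplex (properPart α) (m + 1)) (k : Fin (m + 1)) :
    grade ℕ (σ.1 k) = (k : ℕ) + 1 := by
  have hsm : StrictMono (fun i => grade ℕ (σ.1 i)) := grade_strictMono.comp σ.2.1
  have h0 : 1 ≤ grade ℕ (σ.1 0) := by
    have hb : (⊥ : α) < σ.1 0 := (σ.2.2 0).1.bot_lt
    have := grade_lt hb; omega
  have hmlt : (m : ℕ) < m + 1 := by omega
  have hm : grade ℕ (σ.1 ⟨m, hmlt⟩) ≤ m + 1 := by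
    have : σ.1 ⟨m, hmlt⟩ < ⊤ := (σ.2.2 _).2.lt_top
    have := grade_lt this; omega
  have l1 := hsm.fin_nat_add_le (k : ℕ) 0 k (by simp)
  have l2 := hsm.fin_nat_add_le (m - (k : ℕ)) k ⟨m, hmlt⟩ (by have := k.isLt; simp; omega)
  beta_reduce at l1 l2
  have := k.isLt
  omega

end Graded

set_option linter.unusedSectionVars false

-- H3'
lemma succAbove_coe {n : ℕ} (p : Fin (n + 1)) (i : Fin n) :
    ((p.succAbove i : Fin (n + 1)) : ℕ) = if (i : ℕ) < (p : ℕ) then (i : ℕ) else (i : ℕ) + 1 := by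
  rcases lt_or_ge (Fin.castSucc i) p with h | h
  · rw [Fin.succAbove_of_castSucc_lt _ _ h]
    have h' : (i : ℕ) < (p : ℕ) := by simpa [Fin.lt_def] using h
    simp [h']
  · rw [Fin.succAbove_of_le_castSucc _ _ h]
    have h' : ¬ ((i : ℕ) < (p : ℕ)) := by simp [Fin.le_def] at h; omega
    simp [h']

section Graded
variable [PartialOrder α] [BoundedOrder α] [GradeMinOrder ℕ α]

-- H4
lemma face_grade {m : ℕ} (hrank : grade ℕ (⊤ : α) = m + 2)
    (σ : OrderedSimplex (properPart α) (m + 1)) (i : Fin (m + 1)) (l : Fin m) :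
    grade ℕ ((σ.face i).1 l) = if (l : ℕ) < (i : ℕ) then (l : ℕ) + 1 else (l : ℕ) + 2 := by
  have : (σ.face i).1 l = σ.1 (i.succAbove l) := rfl
  rw [this, facet_grade hrank σ, succAbove_coe]
  split_ifs <;> omega

-- H5
lemma face_idx_eq {m : ℕ} (hrank : grade ℕ (⊤ : α) = m + 2)
    {σ σ' : OrderedSimplex (properPart α) (m + 1)} {i k : Fin (m + 1)}
    (h : σ.face i = σ'.face k) : i = k := by
  have key : ∀ (σ σ' : OrderedSimplex (properPart α) (m + 1)) (i k : Fin (m + 1)),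
      σ.face i = σ'.face k → (i : ℕ) < (k : ℕ) → False := by
    intro σ σ' i k h hik
    have hl : (i : ℕ) < m := by have := k.isLt; omega
    have e1 : grade ℕ ((σ.face i).1 ⟨(i : ℕ), hl⟩) = (i : ℕ) + 2 := by
      rw [face_grade hrank]; simp
    have e2 : grade ℕ ((σ'.face k).1 ⟨(i : ℕ), hl⟩) = (i : ℕ) + 1 := by
      rw [face_grade hrank]; simp [hik]
    rw [h] at e1; omega
  by_contra hne
  have hne' : (i : ℕ) ≠ (k : ℕ) := fun e => hne (Fin.ext e)
  rcases hne'.lt_or_gt with hlt | hlt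
  · exact key σ σ' i k h hlt
  · exact key σ' σ k i h.symm hlt

end Graded

-- H6
lemma eq_of_face_eq [Preorder α] {s : Set α} {j : ℕ} {σ σ' : OrderedSimplex s (j + 1)}
    {k : Fin (j + 1)} (hf : σ.face k = σ'.face k) (hk : σ.1 k = σ'.1 k) : σ = σ' := by
  apply Subtype.ext; funext x
  by_cases hx : x = k
  · subst hx; exact hk
  · obtain ⟨l, hl⟩ := Fin.exists_succAbove_eq hx
    have h2 := congrFun (congrArg Subtype.val hf) l
    rw [← hl]; exact h2

-- H7
open Classical in
lemma simpBoundary_apply {K : Type*} [CommRing K] [Preorder α] {s : Set α} {j : ℕ}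
    (c : SimpChains K s (j + 1)) (τ : OrderedSimplex s j) :
    simpBoundary K s j c τ =
      ∑ σ ∈ c.support, ∑ i : Fin (j + 1),
        (-1 : K) ^ (i : ℕ) * (if σ.face i = τ then c σ else 0) := by
  classical
  rw [simpBoundary, Finsupp.lsum_apply, Finsupp.sum, Finsupp.finset_sum_apply]
  refine Finset.sum_congr rfl fun σ _ => ?_
  rw [LinearMap.sum_apply, Finsupp.finset_sum_apply]
  refine Finset.sum_congr rfl fun i _ => ?_
  rw [LinearMap.smul_apply, Finsupp.lsingle_apply, Finsupp.smul_apply,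
    Finsupp.single_apply, smul_eq_mul]

-- H8/H9
section Field
variable {K : Type*} [Field K] [PartialOrder α] [BoundedOrder α] [GradeMinOrder ℕ α]

open Classical in
lemma exists_other {m : ℕ} (hrank : grade ℕ (⊤ : α) = m + 2)
    {z : SimpChains K (properPart α) (m + 1)}
    (hz : simpBoundary K (properPart α) m z = 0)
    (σ₀ : OrderedSimplex (properPart α) (m + 1)) (k : Fin (m + 1)) (h0 : z σ₀ ≠ 0) :
    ∃ σ', z σ' ≠ 0 ∧ σ'.face k = σ₀.face k ∧ σ' ≠ σ₀ := by
  classical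
  have hev : (simpBoundary K (properPart α) m z) (σ₀.face k) = 0 := by
    rw [hz]; rfl
  rw [simpBoundary_apply] at hev
  have hinner : ∀ σ ∈ z.support,
      (∑ i : Fin (m + 1), (-1 : K) ^ (i : ℕ) * (if σ.face i = σ₀.face k then z σ else 0))
        = (-1 : K) ^ (k : ℕ) * (if σ.face k = σ₀.face k then z σ else 0) := by
    intro σ _
    refine Finset.sum_eq_single_of_mem k (Finset.mem_univ k) ?_
    intro i _ hik
    rw [if_neg, mul_zero]
    intro hc; exact hik (face_idx_eq hrank hc)
  rw [Finset.sum_congr rfl hinner, ← Finset.mul_sum] at hev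
  have hev2 : ∑ σ ∈ z.support, (if σ.face k = σ₀.face k then z σ else 0) = 0 := by
    rcases mul_eq_zero.1 hev with h | h
    · exact absurd h (pow_ne_zero _ (neg_ne_zero.2 one_ne_zero))
    · exact h
  by_contra hcon
  push_neg at hcon
  have hsum : ∑ σ ∈ z.support, (if σ.face k = σ₀.face k then z σ else 0)
      = (if σ₀.face k = σ₀.face k then z σ₀ else 0) := by
    refine Finset.sum_eq_single_of_mem σ₀ (Finsupp.mem_support_iff.2 h0) ?_
    intro σ hσ hne
    rw [if_neg]
    intro hc
    exact hne (hcon σ (Finsupp.mem_support_iff.1 hσ) hc)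
  rw [hsum, if_pos rfl] at hev2
  exact h0 hev2

end Field

-- cons machinery
lemma strictMono_fin_cons {β : Type*} [Preorder β] {j : ℕ} {x : β} {f : Fin j → β}
    (hf : StrictMono f) (hx : ∀ i, x < f i) : StrictMono (Fin.cons x f : Fin (j + 1) → β) := by
  intro p q hpq
  induction q using Fin.cases with
  | zero => exact absurd hpq (by simp)
  | succ q =>
    induction p using Fin.cases with
    | zero => rw [Fin.cons_zero, Fin.cons_succ]; exact hx q
    | succ p =>
      simp only [Fin.cons_succ]
      exact hf (Fin.succ_lt_succ_iff.mp hpq)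

section Cons
variable [PartialOrder α] [BoundedOrder α]

def atomCons (a : α) (ha : a ∈ properPart α) {j : ℕ}
    (τ : OrderedSimplex (Set.Ioo a (⊤ : α)) j) : OrderedSimplex (properPart α) (j + 1) :=
  ⟨Fin.cons a (fun i => τ.1 i), strictMono_fin_cons τ.2.1 (fun i => (τ.2.2 i).1), by
    intro i
    induction i using Fin.cases with
    | zero => exact ha
    | succ l =>
      rw [Fin.cons_succ]
      exact ⟨(lt_of_le_of_lt bot_le (τ.2.2 l).1).ne', ((τ.2.2 l).2).ne⟩⟩

lemma atomCons_injective (a : α) (ha : a ∈ properPart α) {j : ℕ} :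
    Function.Injective (atomCons a ha (j := j)) := by
  intro τ τ' h
  have h' : (Fin.cons a (fun i => τ.1 i) : Fin (j + 1) → α)
      = (Fin.cons a (fun i => τ'.1 i) : Fin (j + 1) → α) :=
    congrArg Subtype.val h
  have h2 := Fin.cons_right_injective (α := fun _ : Fin (j + 1) => α) a h'
  exact Subtype.ext (funext fun i => congrFun h2 i)

noncomputable def atomRestrict {K : Type*} [CommRing K] (a : α) (ha : a ∈ properPart α)
    {j : ℕ} (z : SimpChains K (properPart α) (j + 1)) : SimpChains K (Set.Ioo a (⊤ : α)) j :=
  Finsupp.comapDomain (atomCons a ha) z ((atomCons_injective a ha).injOn)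

lemma atomRestrict_apply {K : Type*} [CommRing K] (a : α) (ha : a ∈ properPart α)
    {j : ℕ} (z : SimpChains K (properPart α) (j + 1)) (τ : OrderedSimplex (Set.Ioo a (⊤ : α)) j) :
    atomRestrict a ha z τ = z (atomCons a ha τ) :=
  Finsupp.comapDomain_apply _ _ _ _

lemma atomCons_face_succ (a : α) (ha : a ∈ properPart α) {j : ℕ}
    (τ : OrderedSimplex (Set.Ioo a (⊤ : α)) (j + 1)) (i : Fin (j + 1)) :
    (atomCons a ha τ).face i.succ = atomCons a ha (τ.face i) := by
  apply Subtype.ext; funext l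
  induction l using Fin.cases with
  | zero =>
    show (atomCons a ha τ).1 ((i.succ).succAbove 0) = (atomCons a ha (τ.face i)).1 0
    rw [Fin.succ_succAbove_zero]
    rfl
  | succ l =>
    show (atomCons a ha τ).1 ((i.succ).succAbove l.succ) = (atomCons a ha (τ.face i)).1 l.succ
    rw [Fin.succ_succAbove_succ]
    show (Fin.cons a (fun i' => τ.1 i') : Fin (j + 2) → α) ((i.succAbove l).succ)
        = (Fin.cons a (fun l' => (τ.face i).1 l') : Fin (j + 1) → α) l.succ
    rw [Fin.cons_succ, Fin.cons_succ]
    rfl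

lemma exists_atomCons_eq {j : ℕ} (σ : OrderedSimplex (properPart α) (j + 1)) (a : α)
    (ha : a ∈ properPart α) (h0 : σ.1 0 = a) :
    ∃ τ : OrderedSimplex (Set.Ioo a (⊤ : α)) j, atomCons a ha τ = σ := by
  refine ⟨⟨fun l => σ.1 l.succ, σ.2.1.comp Fin.strictMono_succ,
    fun l => ⟨h0 ▸ σ.2.1 (Fin.succ_pos l), lt_of_le_of_ne le_top (σ.2.2 _).2⟩⟩, ?_⟩
  apply Subtype.ext; funext l
  induction l using Fin.cases with
  | zero => exact h0.symm
  | succ l => exact rfl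

end Cons

section Graded2
variable [PartialOrder α] [BoundedOrder α] [GradeMinOrder ℕ α]

lemma isEmpty_top_chains {m : ℕ} (hrank : grade ℕ (⊤ : α) = m + 2) {a : α}
    (hga : grade ℕ a = 1) : IsEmpty (OrderedSimplex (Set.Ioo a (⊤ : α)) (m + 1)) := by
  constructor
  intro τ
  have hsm : StrictMono (fun i => grade ℕ (τ.1 i)) := grade_strictMono.comp τ.2.1
  have h0 : 2 ≤ grade ℕ (τ.1 0) := by
    have := grade_lt (τ.2.2 0).1; omega
  have hmlt : (m : ℕ) < m + 1 := by omega
  have hl := hsm.fin_nat_add_le m 0 ⟨m, hmlt⟩ (by simp)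
  have hm : grade ℕ (τ.1 ⟨m, hmlt⟩) < m + 2 := by
    have := grade_lt (τ.2.2 ⟨m, hmlt⟩).2; omega
  beta_reduce at hl
  omega

lemma boundaries_bot {K : Type*} [CommRing K] {S : Set α} {m : ℕ}
    (hempty : IsEmpty (OrderedSimplex S (m + 1))) : simpBoundaries (α := α) K S m = ⊥ := by
  rw [simpBoundaries, LinearMap.range_eq_bot]
  apply LinearMap.ext
  intro c
  have hc : c = 0 := by
    ext σ; exact hempty.elim σ
  rw [hc, map_zero]
  rfl

open Classical in
lemma atomRestrict_cycle {K : Type*} [Field K] :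
    ∀ {m : ℕ}, grade ℕ (⊤ : α) = m + 2 →
    ∀ {z : SimpChains K (properPart α) (m + 1)},
    simpBoundary K (properPart α) m z = 0 →
    ∀ (a : α) (ha : a ∈ properPart α), grade ℕ a = 1 →
    atomRestrict a ha z ∈ simpCycles K (Set.Ioo a (⊤ : α)) m := by
  intro m
  match m with
  | 0 => intro _ z _ a ha _; exact Submodule.mem_top
  | (j + 1) =>
    intro hrank z hz a ha hga
    show atomRestrict a ha z ∈ LinearMap.ker (simpBoundary K (Set.Ioo a (⊤ : α)) j)
    rw [LinearMap.mem_ker]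
    classical
    set w := atomRestrict a ha z with hw
    ext ρ
    rw [simpBoundary_apply]
    -- inner claim
    have hterm : ∀ τ ∈ w.support,
        (∑ i' : Fin (j + 1), (-1 : K) ^ (i' : ℕ) * (if τ.face i' = ρ then w τ else 0))
        = -(∑ i : Fin (j + 2), (-1 : K) ^ (i : ℕ) *
            (if (atomCons a ha τ).face i = atomCons a ha ρ then z (atomCons a ha τ) else 0)) := by
      intro τ _
      conv_rhs => rw [Fin.sum_univ_succ]
      have h00 : ((atomCons a ha τ).face 0 = atomCons a ha ρ) = False := by
        simp only [eq_iff_iff, iff_false]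
        intro hc
        have hval : ((atomCons a ha τ).face 0).1 0 = (atomCons a ha ρ).1 0 :=
          congrFun (congrArg Subtype.val hc) 0
        have h1 : ((atomCons a ha τ).face 0).1 0 = τ.1 0 := by
          show (atomCons a ha τ).1 ((0 : Fin (j + 2)).succAbove 0) = τ.1 0
          rw [Fin.succAbove_zero]
          rfl
        have h2 : (atomCons a ha ρ).1 0 = a := rfl
        rw [h1, h2] at hval
        have : grade ℕ a < grade ℕ (τ.1 0) := grade_lt (τ.2.2 0).1
        rw [hval] at this
        omega
      rw [h00]
      simp only [if_false, ite_false, mul_zero, zero_add]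
      rw [← Finset.sum_neg_distrib]
      refine Finset.sum_congr rfl fun i' _ => ?_
      rw [atomCons_face_succ]
      have hcnd : ((atomCons a ha (τ.face i')) = atomCons a ha ρ) = (τ.face i' = ρ) :=
        propext ⟨fun h => atomCons_injective a ha h, fun h => congrArg _ h⟩
      rw [hcnd]
      have hzw : z (atomCons a ha τ) = w τ := (atomRestrict_apply a ha z τ).symm
      rw [hzw, Fin.val_succ, pow_succ]
      ring
    rw [Finset.sum_congr rfl hterm, Finset.sum_neg_distrib]
    -- now reindex
    have himg : ∑ τ ∈ w.support, (∑ i : Fin (j + 2), (-1 : K) ^ (i : ℕ) *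
          (if (atomCons a ha τ).face i = atomCons a ha ρ then z (atomCons a ha τ) else 0))
        = ∑ σ ∈ z.support, (∑ i : Fin (j + 2), (-1 : K) ^ (i : ℕ) *
          (if σ.face i = atomCons a ha ρ then z σ else 0)) := by
      rw [← Finset.sum_image (f := fun σ => ∑ i : Fin (j + 2), (-1 : K) ^ (i : ℕ) *
          (if σ.face i = atomCons a ha ρ then z σ else 0))
          (g := atomCons a ha) (fun x _ y _ h => atomCons_injective a ha h)]
      refine Finset.sum_subset ?_ ?_
      · intro σ hσ
        rw [Finset.mem_image] at hσ
        obtain ⟨τ, hτ, rfl⟩ := hσ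
        rw [Finsupp.mem_support_iff] at hτ ⊢
        rwa [atomRestrict_apply] at hτ
      · intro σ hσ hnot
        refine Finset.sum_eq_zero fun i _ => ?_
        rw [if_neg, mul_zero]
        intro hface
        -- derive σ.1 0 = a
        have hval : (σ.face i).1 0 = a := congrFun (congrArg Subtype.val hface) 0
        have hgr : grade ℕ (σ.1 (i.succAbove 0)) = ((i.succAbove 0 : Fin (j + 2)) : ℕ) + 1 :=
          facet_grade hrank σ (i.succAbove 0)
        have hval' : σ.1 (i.succAbove 0) = a := hval
        rw [hval', hga] at hgr
        have h0' : i.succAbove 0 = 0 := Fin.ext (by simp only [Fin.val_zero]; omega)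
        have hσ0 : σ.1 0 = a := by rw [← h0']; exact hval'
        obtain ⟨τ', hτ'⟩ := exists_atomCons_eq σ a ha hσ0
        apply hnot
        rw [Finset.mem_image]
        refine ⟨τ', ?_, hτ'⟩
        rw [Finsupp.mem_support_iff, atomRestrict_apply, hτ']
        exact Finsupp.mem_support_iff.1 hσ
    rw [himg, ← simpBoundary_apply, hz]
    simp

end Graded2

/-- **Step 2.**  Let `L` be a finite graded lattice of rank `n ≥ 2` whose proper part
has nonzero reduced homology `H̃_{n-2}` over `K`, and let `b` be a coatom of `L`.
Then some atom `a` of `L` is incomparable to `b` and satisfies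
`H̃_{n-3}(Δ(a,⊤); K) ≠ 0`. -/
theorem exists_incomparable_atom
    (n : ℕ) (hn : 2 ≤ n)
    (α : Type*) [Lattice α] [BoundedOrder α] [Fintype α] [GradeMinOrder ℕ α]
    (hrank : grade ℕ (⊤ : α) = n)
    (K : Type*) [Field K]
    (hH : Nontrivial (ReducedHomology K (properPart α) (n - 1)))
    (b : α) (hb : grade ℕ b = n - 1) :
    ∃ a : α, grade ℕ a = 1 ∧ ¬ a ≤ b ∧ ¬ b ≤ a ∧
      Nontrivial (ReducedHomology K (Set.Ioo a (⊤ : α)) (n - 2)) := by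
  classical
  obtain ⟨m, rfl⟩ : ∃ m, n = m + 2 := ⟨n - 2, by omega⟩
  have hb' : grade ℕ b = m + 1 := by omega
  -- extract a nonzero cycle z
  have hH' : Nontrivial (↥(simpCycles K (properPart α) (m + 1)) ⧸
      (simpBoundaries K (properPart α) (m + 1)).comap
        (simpCycles K (properPart α) (m + 1)).subtype) := hH
  obtain ⟨c, hc⟩ := exists_ne (0 : ↥(simpCycles K (properPart α) (m + 1)) ⧸
      (simpBoundaries K (properPart α) (m + 1)).comap
        (simpCycles K (properPart α) (m + 1)).subtype)
  obtain ⟨v, rfl⟩ := Submodule.Quotient.mk_surjective _ c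
  have hv : v ≠ 0 := by
    intro e; apply hc; rw [e]; exact Submodule.Quotient.mk_zero _
  set z : SimpChains K (properPart α) (m + 1) := (v : SimpChains K (properPart α) (m + 1))
    with hzdef
  have hz0 : z ≠ 0 := fun e => hv (Subtype.ext e)
  have hzc : simpBoundary K (properPart α) m z = 0 := by
    have h2 : v.1 ∈ LinearMap.ker (simpBoundary K (properPart α) m) := v.2
    exact LinearMap.mem_ker.1 h2
  -- key claim: there is a supported facet whose atom is not below b
  have key : ∃ σ₀ : OrderedSimplex (properPart α) (m + 1), z σ₀ ≠ 0 ∧ ¬ σ₀.1 0 ≤ b := by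
    by_contra hcon
    push_neg at hcon
    have step : ∀ k, ∀ hk : k < m + 1, ∀ σ : OrderedSimplex (properPart α) (m + 1),
        z σ ≠ 0 → σ.1 ⟨k, hk⟩ ≤ b := by
      intro k
      induction k with
      | zero =>
        intro hk σ hσ
        have h0 : (⟨0, hk⟩ : Fin (m + 1)) = 0 := by ext; simp
        rw [h0]; exact hcon σ hσ
      | succ k ih =>
        intro hk σ hσ
        have hkm : k < m + 1 := by omega
        obtain ⟨σ', hσ', hface, hne⟩ := exists_other hrank hzc σ ⟨k, hkm⟩ hσ
        have hxb : σ'.1 ⟨k, hkm⟩ ≤ b := ih hkm σ' hσ'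
        have hyb : σ.1 ⟨k, hkm⟩ ≤ b := ih hkm σ hσ
        have hxy : σ'.1 ⟨k, hkm⟩ ≠ σ.1 ⟨k, hkm⟩ := fun e => hne (eq_of_face_eq hface e)
        have hklt : k < m := by omega
        have hsucc : (⟨k, hkm⟩ : Fin (m + 1)).succAbove ⟨k, hklt⟩ = ⟨k + 1, hk⟩ := by
          rw [Fin.succAbove_of_le_castSucc _ _ (by rw [Fin.le_def]; simp)]
          rfl
        have hnext : σ'.1 ⟨k + 1, hk⟩ = σ.1 ⟨k + 1, hk⟩ := by
          have h3 := congrFun (congrArg Subtype.val hface) ⟨k, hklt⟩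
          have e1 : (σ'.face ⟨k, hkm⟩).1 ⟨k, hklt⟩ = σ'.1 ⟨k + 1, hk⟩ := by
            show σ'.1 ((⟨k, hkm⟩ : Fin (m + 1)).succAbove ⟨k, hklt⟩) = _
            rw [hsucc]
          have e2 : (σ.face ⟨k, hkm⟩).1 ⟨k, hklt⟩ = σ.1 ⟨k + 1, hk⟩ := by
            show σ.1 ((⟨k, hkm⟩ : Fin (m + 1)).succAbove ⟨k, hklt⟩) = _
            rw [hsucc]
          rw [← e1, ← e2, h3]
        have hlt' : σ'.1 ⟨k, hkm⟩ < σ.1 ⟨k + 1, hk⟩ := by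
          rw [← hnext]
          exact σ'.2.1 (by rw [Fin.lt_def]; simp)
        have hlt : σ.1 ⟨k, hkm⟩ < σ.1 ⟨k + 1, hk⟩ := σ.2.1 (by rw [Fin.lt_def]; simp)
        have hgx : grade ℕ (σ'.1 ⟨k, hkm⟩) = k + 1 := facet_grade hrank σ' ⟨k, hkm⟩
        have hgy : grade ℕ (σ.1 ⟨k, hkm⟩) = k + 1 := facet_grade hrank σ ⟨k, hkm⟩
        have hgnext : grade ℕ (σ.1 ⟨k + 1, hk⟩) = k + 2 := facet_grade hrank σ ⟨k + 1, hk⟩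
        have hxsup : σ'.1 ⟨k, hkm⟩ < σ'.1 ⟨k, hkm⟩ ⊔ σ.1 ⟨k, hkm⟩ := by
          refine lt_of_le_of_ne le_sup_left (fun e => ?_)
          have hyx : σ.1 ⟨k, hkm⟩ ≤ σ'.1 ⟨k, hkm⟩ := e ▸ le_sup_right
          have : σ.1 ⟨k, hkm⟩ < σ'.1 ⟨k, hkm⟩ := hyx.lt_of_ne (fun e2 => hxy e2.symm)
          have := grade_lt this
          omega
        have hsup_le : σ'.1 ⟨k, hkm⟩ ⊔ σ.1 ⟨k, hkm⟩ ≤ σ.1 ⟨k + 1, hk⟩ := sup_le hlt'.le hlt.le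
        have hgsup : k + 2 ≤ grade ℕ (σ'.1 ⟨k, hkm⟩ ⊔ σ.1 ⟨k, hkm⟩) := by
          have := grade_lt hxsup; omega
        have heq : σ.1 ⟨k + 1, hk⟩ = σ'.1 ⟨k, hkm⟩ ⊔ σ.1 ⟨k, hkm⟩ := by
          rcases hsup_le.lt_or_eq with h | h
          · have := grade_lt h; omega
          · exact h.symm
        rw [heq]
        exact sup_le hxb hyb
    have hmm : m < m + 1 := by omega
    have htop : ∀ σ : OrderedSimplex (properPart α) (m + 1), z σ ≠ 0 → σ.1 ⟨m, hmm⟩ = b := by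
      intro σ hσ
      have hle := step m hmm σ hσ
      have hg : grade ℕ (σ.1 ⟨m, hmm⟩) = m + 1 := facet_grade hrank σ ⟨m, hmm⟩
      rcases hle.lt_or_eq with h | h
      · have := grade_lt h; omega
      · exact h
    obtain ⟨σ₁, hσ₁⟩ : ∃ σ, z σ ≠ 0 := by
      by_contra h; push_neg at h
      exact hz0 (Finsupp.ext fun σ => h σ)
    obtain ⟨σ', hσ', hface, hne⟩ := exists_other hrank hzc σ₁ ⟨m, hmm⟩ hσ₁
    exact hne (eq_of_face_eq hface (by rw [htop σ' hσ', htop σ₁ hσ₁]))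
  obtain ⟨σ₀, hσ₀, hnle⟩ := key
  set a := σ₀.1 0 with hadef
  have hga : grade ℕ a = 1 := by
    have := facet_grade hrank σ₀ 0
    simpa using this
  have ha : a ∈ properPart α := σ₀.2.2 0
  refine ⟨a, hga, hnle, ?_, ?_⟩
  · intro hba
    have hba' : b < a := lt_of_le_of_ne hba (fun e => hnle (e ▸ le_refl b))
    have := grade_lt hba'
    omega
  · have hw0 : atomRestrict a ha z ≠ 0 := by
      obtain ⟨τ₀, hτ₀⟩ := exists_atomCons_eq σ₀ a ha rfl
      intro e
      apply hσ₀
      have h4 : atomRestrict a ha z τ₀ = 0 := by rw [e]; rfl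
      rwa [atomRestrict_apply, hτ₀] at h4
    have hmem := atomRestrict_cycle hrank hzc a ha hga
    have hempty := isEmpty_top_chains hrank hga
    have hbb : simpBoundaries K (Set.Ioo a (⊤ : α)) m = ⊥ := boundaries_bot hempty
    show Nontrivial (ReducedHomology K (Set.Ioo a (⊤ : α)) m)
    unfold ReducedHomology
    rw [hbb]
    refine ⟨Submodule.Quotient.mk ⟨atomRestrict a ha z, hmem⟩, 0, ?_⟩
    rw [Ne, Submodule.Quotient.mk_eq_zero]
    intro hmem2
    apply hw0
    have : (⟨atomRestrict a ha z, hmem⟩ : ↥(simpCycles K (Set.Ioo a (⊤ : α)) m)) = 0 := by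
      simpa [Submodule.comap_bot, Submodule.ker_subtype] using hmem2
    exact congrArg Subtype.val this
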